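/- Let (C₁,∂₁,B₁) and (C₂,∂₂,B₂) be finitely generated free chain complexes over R = F₂[U,V,U⁻¹,V⁻¹] with chosen bases, and let F : C₁ → C₂ be an R-equivariant chain map. Then Φ_{B₂} ∘ F + F ∘ Φ_{B₁} = ∂₂ ∘ F' + F' ∘ ∂₁, where F' is the R-linear map whose matrix (with respect to B₁, B₂) is the formal U-derivative of the matrix of F. In particular, F commutes with the formal derivative maps Φ up to R-equivariant chain homotopy. -/

import Mathlib

open Finsupp

noncomputable section

abbrev F2 : Type := ZMod 2

/-- The Laurent polynomial ring `F₂[U,V,U⁻¹,V⁻¹]`, realized as the monoid algebra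
of `ℤ × ℤ` over `F₂`; `U` corresponds to `(1,0)` and `V` to `(0,1)`. -/
abbrev R2 : Type := AddMonoidAlgebra F2 (ℤ × ℤ)

/-- Formal derivative of a Laurent polynomial with respect to `U`. -/
def dU (f : R2) : R2 :=
  Finsupp.sum f.coeff fun mn c => AddMonoidAlgebra.single (mn.1 - 1, mn.2) ((mn.1 : F2) * c)

/-- Formal derivative of a Laurent polynomial with respect to `V`. -/
def dV (f : R2) : R2 :=
  Finsupp.sum f.coeff fun mn c => AddMonoidAlgebra.single (mn.1, mn.2 - 1) ((mn.2 : F2) * c)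

/-- The `R2`-linear map `(B →₀ R2) →ₗ (B' →₀ R2)` determined by its values on
the standard basis. -/
def bmap {B B' : Type} (v : B → (B' →₀ R2)) : (B →₀ R2) →ₗ[R2] (B' →₀ R2) :=
  Finsupp.lsum R2 fun x => LinearMap.toSpanSingleton R2 _ (v x)

/-- The matrix entry `P_{x y}` of a linear map with respect to the standard bases. -/
def matOf {B B' : Type} (f : (B →₀ R2) →ₗ[R2] (B' →₀ R2)) (x : B) (y : B') : R2 :=
  f (Finsupp.single x 1) y

/-- Apply `g : R2 → R2` to each matrix entry of `f`. -/
def entrywise {B B' : Type} [Finite B'] (g : R2 → R2)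
    (f : (B →₀ R2) →ₗ[R2] (B' →₀ R2)) : (B →₀ R2) →ₗ[R2] (B' →₀ R2) :=
  bmap fun x => Finsupp.equivFunOnFinite.symm fun y => g (matOf f x y)

/-- `Φ_B`, the formal derivative of the differential with respect to `U`. -/
def PhiB {B : Type} [Finite B] (d : (B →₀ R2) →ₗ[R2] (B →₀ R2)) :
    (B →₀ R2) →ₗ[R2] (B →₀ R2) :=
  entrywise dU d

/-- `Ψ_B`, the formal derivative of the differential with respect to `V`. -/
def PsiB {B : Type} [Finite B] (d : (B →₀ R2) →ₗ[R2] (B →₀ R2)) :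
    (B →₀ R2) →ₗ[R2] (B →₀ R2) :=
  entrywise dV d

/-! ### Auxiliary lemmas -/

lemma dU_zero : dU 0 = 0 := by simp [dU]

lemma dU_add (a b : R2) : dU (a + b) = dU a + dU b := by
  unfold dU
  rw [AddMonoidAlgebra.coeff_add, Finsupp.sum_add_index (fun mn _ => by simp)
    (fun mn _ c₁ c₂ => by rw [mul_add, AddMonoidAlgebra.single_add])]

/-- `dU` as an additive monoid hom. -/
def dUh : R2 →+ R2 where
  toFun := dU
  map_zero' := dU_zero
  map_add' := dU_add

lemma dU_single (mn : ℤ × ℤ) (c : F2) :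
    dU (AddMonoidAlgebra.single mn c) = AddMonoidAlgebra.single (mn.1 - 1, mn.2) ((mn.1 : F2) * c) := by
  unfold dU
  rw [AddMonoidAlgebra.coeff_single, Finsupp.sum_single_index]
  simp

lemma single_mul (a b : R2) (m n : ℤ × ℤ) (c d : F2)
    (ha : a = AddMonoidAlgebra.single m c) (hb : b = AddMonoidAlgebra.single n d) :
    a * b = AddMonoidAlgebra.single (m + n) (c * d) := by
  subst ha hb
  exact AddMonoidAlgebra.single_mul_single m n c d

lemma dU_mul (a b : R2) : dU (a * b) = dU a * b + a * dU b := by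
  induction a using AddMonoidAlgebra.induction_linear with
  | zero => simp [dU_zero]
  | add f g hf hg =>
      rw [add_mul, dU_add, hf, hg, dU_add, add_mul, add_mul]
      abel
  | single m c =>
      induction b using AddMonoidAlgebra.induction_linear with
      | zero => simp [dU_zero]
      | add f g hf hg =>
          rw [mul_add, dU_add, hf, hg, dU_add, mul_add, mul_add]
          abel
      | single n d =>
          rw [single_mul _ _ m n c d rfl rfl, dU_single, dU_single, dU_single,
            single_mul _ _ (m.1 - 1, m.2) n ((m.1 : F2) * c) d rfl rfl,
            single_mul _ _ m (n.1 - 1, n.2) c ((n.1 : F2) * d) rfl rfl]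
          have hidx : ((m.1 - 1, m.2) : ℤ × ℤ) + n = ((m + n).1 - 1, (m + n).2) := by
            simp [Prod.ext_iff]
            ring
          have hidx2 : m + ((n.1 - 1, n.2) : ℤ × ℤ) = ((m + n).1 - 1, (m + n).2) := by
            simp [Prod.ext_iff]
            ring
          rw [hidx, hidx2, ← AddMonoidAlgebra.single_add]
          congr 1
          show ((m.1 + n.1 : ℤ) : F2) * (c * d) = _
          push_cast
          ring

lemma dU_sum {ι : Type} (s : Finset ι) (f : ι → R2) :
    dU (∑ i ∈ s, f i) = ∑ i ∈ s, dU (f i) :=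
  map_sum dUh f s

lemma bmap_single {B B' : Type} (v : B → (B' →₀ R2)) (x : B) :
    bmap v (Finsupp.single x 1) = v x := by
  simp [bmap]

lemma matOf_entrywise {B B' : Type} [Finite B'] (g : R2 → R2)
    (f : (B →₀ R2) →ₗ[R2] (B' →₀ R2)) (x : B) (y : B') :
    matOf (entrywise g f) x y = g (matOf f x y) := by
  unfold matOf entrywise
  rw [bmap_single]
  rfl

lemma lm_ext {B B' : Type} (f g : (B →₀ R2) →ₗ[R2] (B' →₀ R2))
    (h : ∀ x y, matOf f x y = matOf g x y) : f = g := by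
  apply Finsupp.lhom_ext'
  intro x
  apply LinearMap.ext_ring
  exact Finsupp.ext fun y => h x y

lemma apply_eq_sum {B B' : Type} [Fintype B] (g : (B →₀ R2) →ₗ[R2] (B' →₀ R2))
    (w : B →₀ R2) (z : B') :
    g w z = ∑ y, w y * matOf g y z := by
  have hw : w = ∑ y : B, Finsupp.single y (w y) := by
    exact (Finsupp.univ_sum_single w).symm
  calc g w z = (∑ y : B, g (Finsupp.single y (w y))) z := by rw [← map_sum, ← hw]
    _ = ∑ y : B, (g (Finsupp.single y (w y))) z := by rw [Finsupp.finset_sum_apply]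
    _ = ∑ y, w y * matOf g y z := Finset.sum_congr rfl fun y _ => by
        have h1 : Finsupp.single y (w y) = (w y) • Finsupp.single y (1 : R2) := by
          rw [Finsupp.smul_single, smul_eq_mul, mul_one]
        rw [h1, map_smul, Finsupp.smul_apply, smul_eq_mul]
        rfl

lemma matOf_comp {B₁ B₂ B₃ : Type} [Fintype B₂]
    (f : (B₁ →₀ R2) →ₗ[R2] (B₂ →₀ R2)) (g : (B₂ →₀ R2) →ₗ[R2] (B₃ →₀ R2))
    (x : B₁) (z : B₃) :
    matOf (g ∘ₗ f) x z = ∑ y, matOf f x y * matOf g y z := by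
  unfold matOf
  rw [LinearMap.comp_apply]
  exact apply_eq_sum g _ z

lemma matOf_add {B B' : Type} (f g : (B →₀ R2) →ₗ[R2] (B' →₀ R2)) (x : B) (y : B') :
    matOf (f + g) x y = matOf f x y + matOf g x y := rfl

lemma entrywise_comp {B₁ B₂ B₃ : Type} [Fintype B₂] [Fintype B₃]
    (f : (B₁ →₀ R2) →ₗ[R2] (B₂ →₀ R2)) (g : (B₂ →₀ R2) →ₗ[R2] (B₃ →₀ R2)) :
    entrywise dU (g ∘ₗ f) = entrywise dU g ∘ₗ f + g ∘ₗ entrywise dU f := by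
  apply lm_ext
  intro x z
  rw [matOf_entrywise, matOf_comp, matOf_add, matOf_comp, matOf_comp, dU_sum,
    ← Finset.sum_add_distrib]
  refine Finset.sum_congr rfl fun y _ => ?_
  rw [dU_mul, matOf_entrywise, matOf_entrywise]
  ring

lemma two_eq_zero : (2 : R2) = 0 := by
  have h1 : (1 : R2) = AddMonoidAlgebra.single 0 1 := rfl
  have : (2 : R2) = 1 + 1 := by norm_num
  rw [this, h1, ← AddMonoidAlgebra.single_add]
  norm_num
  rfl

/-- for an `R`-equivariant chain map `F : C₁ → C₂` between
finitely generated free chain complexes with bases, one has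
`Φ_{B₂} ∘ F + F ∘ Φ_{B₁} = ∂₂ ∘ F' + F' ∘ ∂₁`, where `F'` is the map whose
matrix is the formal `U`-derivative of the matrix of `F`; in particular `F`
commutes with the maps `Φ` up to `R`-equivariant chain homotopy. -/
theorem stmt4 {B₁ B₂ : Type} [Fintype B₁] [Fintype B₂]
    (d₁ : (B₁ →₀ R2) →ₗ[R2] (B₁ →₀ R2)) (d₂ : (B₂ →₀ R2) →ₗ[R2] (B₂ →₀ R2))
    (hd₁ : d₁ ∘ₗ d₁ = 0) (hd₂ : d₂ ∘ₗ d₂ = 0)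
    (F : (B₁ →₀ R2) →ₗ[R2] (B₂ →₀ R2)) (hF : d₂ ∘ₗ F = F ∘ₗ d₁) :
    PhiB d₂ ∘ₗ F + F ∘ₗ PhiB d₁ = d₂ ∘ₗ entrywise dU F + entrywise dU F ∘ₗ d₁ := by
  have h2 : ∀ f : (B₁ →₀ R2) →ₗ[R2] (B₂ →₀ R2), f + f = 0 := by
    intro f
    have : f + f = (2 : R2) • f := by rw [two_smul]
    rw [this, two_eq_zero, zero_smul]
  have key : PhiB d₂ ∘ₗ F + d₂ ∘ₗ entrywise dU F
      = entrywise dU F ∘ₗ d₁ + F ∘ₗ PhiB d₁ := by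
    have e1 := entrywise_comp F d₂
    have e2 := entrywise_comp d₁ F
    rw [hF] at e1
    rw [e2] at e1
    unfold PhiB
    exact e1.symm
  set A := PhiB d₂ ∘ₗ F
  set P := d₂ ∘ₗ entrywise dU F
  set Q := entrywise dU F ∘ₗ d₁
  set D := F ∘ₗ PhiB d₁
  have step1 : (A + P) + (P + D) = A + D := by
    rw [show (A + P) + (P + D) = A + ((P + P) + D) by abel, h2 P, zero_add]
  have step2 : (Q + D) + (P + D) = P + Q := by
    rw [show (Q + D) + (P + D) = (P + Q) + (D + D) by abel, h2 D, add_zero]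
  rw [← step1, key, step2]

end
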